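/- For any digraph D with vertex set J and any spanning subgraph H of D, there exist a finite set I disjoint from J and a digraph G on vertex set I ∪ J such that the induced subgraph G[J] equals H and the reduction G^{-I} equals D. -/

import Mathlib

/-- Path from `u` to `w` with all internal vertices in `I` (at least one). -/
def PathThrough {V : Type*} (G : V → V → Prop) (I : Set V) (u w : V) : Prop :=
  ∃ l : List V, l ≠ [] ∧ l.Nodup ∧ (∀ i ∈ l, i ∈ I) ∧ List.Chain G u (l ++ [w])

/-- The simultaneous `I`-reduction of a digraph. -/
def gReduceSet {V : Type*} (G : V → V → Prop) (I : Set V) : V → V → Prop :=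
  fun a b => a ∉ I ∧ b ∉ I ∧ (G a b ∨ PathThrough G I a b)

/-- `I` is an acyclic set of `G`. -/
def AcyclicIn {V : Type*} (G : V → V → Prop) (I : Set V) : Prop :=
  ∀ a ∈ I, ¬ ∃ l : List V, (∀ i ∈ l, i ∈ I) ∧ List.Chain G a (l ++ [a])

/-- For any (finite) digraph `D` on vertex set `J` and any spanning subgraph `H` of
`D`, there exist a finite set `I` of new vertices (the `Sum.inr` part) and a digraph
`G` on `I ∪ J` such that `I` is acyclic, the induced subgraph `G[J]` equals `H`, and
the reduction `G^{-I}` equals `D`. -/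
theorem stmt6 {J : Type*} [Fintype J] (D H : J → J → Prop)
    (hH : ∀ a b, H a b → D a b) :
    ∃ (ι : Type) (_ : Fintype ι) (G : J ⊕ ι → J ⊕ ι → Prop),
      AcyclicIn G {x : J ⊕ ι | x.isRight = true} ∧
      (∀ a b : J, G (Sum.inl a) (Sum.inl b) ↔ H a b) ∧
      (∀ a b : J, gReduceSet G {x : J ⊕ ι | x.isRight = true}
          (Sum.inl a) (Sum.inl b) ↔ D a b) := by
  classical
  set P : J × J → Prop := fun p => D p.1 p.2 ∧ ¬ H p.1 p.2 with hP
  haveI : Fintype {p // P p} := Fintype.ofFinite _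
  set n := Fintype.card {p // P p} with hn
  set e : {p // P p} ≃ Fin n := Fintype.equivFin _ with he
  set f : Fin n → J × J := fun v => (e.symm v).1 with hf
  have hfP : ∀ v, P (f v) := fun v => (e.symm v).2
  set G : J ⊕ Fin n → J ⊕ Fin n → Prop := fun x y =>
    match x, y with
    | Sum.inl a, Sum.inl b => H a b
    | Sum.inl a, Sum.inr v => (f v).1 = a
    | Sum.inr v, Sum.inl b => (f v).2 = b
    | Sum.inr _, Sum.inr _ => False
    with hG
  refine ⟨Fin n, inferInstance, G, ?_, ?_, ?_⟩
  · -- acyclic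
    rintro x hx ⟨l, hlI, hchain⟩
    obtain ⟨v, rfl⟩ : ∃ v, x = Sum.inr v := by
      cases x with
      | inl a => simp at hx
      | inr v => exact ⟨v, rfl⟩
    cases l with
    | nil =>
      simp only [List.Chain, List.nil_append, List.chain_cons, List.isChain_singleton,
        and_true] at hchain
      exact hchain
    | cons h t =>
      rw [List.Chain, List.cons_append, List.chain_cons] at hchain
      have hhI := hlI h (by simp)
      cases h with
      | inl a => simp at hhI
      | inr w => exact hchain.1
  · intro a b; rfl
  · intro a b
    constructor
    · rintro ⟨-, -, hab | ⟨l, hne, hnd, hlI, hchain⟩⟩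
      · exact hH a b hab
      · cases l with
        | nil => exact absurd rfl hne
        | cons h t =>
          rw [List.Chain, List.cons_append, List.chain_cons] at hchain
          obtain ⟨v, rfl⟩ : ∃ v, h = Sum.inr v := by
            have := hlI h (by simp)
            cases h with
            | inl a => simp at this
            | inr v => exact ⟨v, rfl⟩
          have h1 : (f v).1 = a := hchain.1
          cases t with
          | nil =>
            simp [List.chain_cons] at hchain
            have h2 : (f v).2 = b := hchain.2
            have := (hfP v).1
            rw [h1, h2] at this
            exact this
          | cons h2 t2 =>
            have h2chain := hchain.2
            rw [List.cons_append, List.chain_cons] at h2chain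
            have := hlI h2 (by simp)
            cases h2 with
            | inl a => simp at this
            | inr w => exact h2chain.1.elim
    · intro hab
      refine ⟨by simp, by simp, ?_⟩
      by_cases hHab : H a b
      · exact Or.inl hHab
      · right
        have hPab : P (a, b) := ⟨hab, hHab⟩
        refine ⟨[Sum.inr (e ⟨(a, b), hPab⟩)], by simp, by simp, by simp, ?_⟩
        simp only [List.cons_append, List.nil_append, List.chain_cons, List.Chain.nil,
          List.Chain, List.isChain_singleton, and_true]
        constructor
        · show (f (e ⟨(a, b), hPab⟩)).1 = a
          simp [hf]
        · show (f (e ⟨(a, b), hPab⟩)).2 = b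
          simp [hf]
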